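/- For real numbers r > 0 and v > 0, define f(v, r) = (1/2) r + v²/(3r) if v ≤ r/2, and f(v, r) = − r³/(48 v²) + r²/(6v) + (2/3) v if v > r/2. Then for all r > 0 and v > 0, (1/4) max(v, r) ≤ f(v, r) ≤ max(v, r). -/
import Mathlib


/-- The closed-form mobile conductance `f(v, r)` of the velocity constrained mobility
model (expression (8) of Theorem 3). -/
noncomputable def mobileConductanceVC (v r : ℝ) : ℝ :=
  if v ≤ r / 2 then (1 / 2) * r + v ^ 2 / (3 * r)
  else -(r ^ 3 / (48 * v ^ 2)) + r ^ 2 / (6 * v) + (2 / 3) * v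

/-- Theorem 3 made precise: for all `r > 0` and `v > 0`, the closed-form mobile
conductance satisfies `(1/4) max(v, r) ≤ f(v, r) ≤ max(v, r)`, i.e. it scales as
`Θ(max(v_max, r))`. -/
theorem mobile_conductance_velocity_bounds (r v : ℝ) (hr : 0 < r) (hv : 0 < v) :
    (1 / 4) * max v r ≤ mobileConductanceVC v r ∧ mobileConductanceVC v r ≤ max v r := by
  unfold mobileConductanceVC
  by_cases h : v ≤ r / 2
  · rw [if_pos h]
    have hm : max v r = r := max_eq_right (by linarith)
    rw [hm]
    constructor
    · have : 0 < v ^ 2 / (3 * r) := by positivity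
      linarith
    · have h1 : v ^ 2 / (3 * r) ≤ r / 12 := by
        rw [div_le_iff₀ (by positivity)]
        nlinarith
      linarith
  · rw [if_neg h]
    push_neg at h
    have hkey : -(r ^ 3 / (48 * v ^ 2)) + r ^ 2 / (6 * v) + (2 / 3) * v
        = (-r ^ 3 + 8 * r ^ 2 * v + 32 * v ^ 3) / (48 * v ^ 2) := by
      field_simp
      ring
    rw [hkey]
    have hv2 : (0:ℝ) < 48 * v ^ 2 := by positivity
    constructor
    · rw [le_div_iff₀ hv2]
      rcases le_total v r with hvr | hvr
      · rw [max_eq_right hvr]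
        nlinarith [sq_nonneg (r - v), sq_nonneg (r - 2*v), mul_pos hv hr, sq_nonneg v]
      · rw [max_eq_left hvr]
        nlinarith [sq_nonneg (r - v), mul_pos hv hr, pow_pos hv 3]
    · rw [div_le_iff₀ hv2]
      rcases le_total v r with hvr | hvr
      · rw [max_eq_right hvr]
        nlinarith [sq_nonneg (r - v), mul_pos hv hr, mul_pos (mul_pos hv hv) hr]
      · rw [max_eq_left hvr]
        nlinarith [sq_nonneg (r - v), mul_pos hv hr, pow_pos hr 3]
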